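/- For every natural number k ≥ 2, the polynomial identity ∑_i C(k-1,i)^2 t^{2i} − ∑_i C(k,i+1)·C(k-2,i) t^{2i+1} = (1-t)^2 · ( ∑_i C(k-2,i)^2 t^{2i} − ∑_i C(k-2,i)·C(k-2,i+1) t^{2i+1} ) holds in ℤ[t]. -/

import Mathlib

/-- Binomial coefficient with integer arguments, with the convention that
`binom n m = 0` when `m < 0` or `m > n`. -/
def binom (n m : ℤ) : ℤ := if 0 ≤ m ∧ m ≤ n then n.toNat.choose m.toNat else 0

open Polynomial Finset

lemma binom_nonneg (n : ℕ) (m : ℤ) (hm : 0 ≤ m) : binom n m = n.choose m.toNat := by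
  unfold binom
  split_ifs with h
  · simp
  · push_neg at h
    have h2 : (n : ℤ) < m := h hm
    have : n < m.toNat := by omega
    simp [Nat.choose_eq_zero_of_lt this]

lemma pascal (n : ℕ) (m : ℤ) : binom n m + binom n (m + 1) = binom (n + 1) (m + 1) := by
  rcases lt_or_ge m 0 with hm | hm
  · rcases lt_or_ge (m + 1) 0 with h1 | h1
    · simp [binom, hm.not_ge, h1.not_ge]
    · have hme : m = -1 := by omega
      subst hme
      norm_num [binom]
      positivity
  · rw [binom_nonneg n m hm, binom_nonneg n (m + 1) (by omega),
      show ((n : ℤ) + 1) = ((n + 1 : ℕ) : ℤ) by push_cast; ring,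
      binom_nonneg (n + 1) (m + 1) (by omega),
      show (m + 1).toNat = m.toNat + 1 by omega, Nat.choose_succ_succ]
    push_cast
    ring

lemma shift (k d : ℕ) (g : ℕ → ℤ) (h0 : g 0 = 0) (hk : g k = 0) :
    ∑ i ∈ range k, C (g i) * X ^ (2 * i + d)
      = X ^ 2 * ∑ i ∈ range k, (C (g (i + 1)) * X ^ (2 * i + d) : ℤ[X]) := by
  rw [Finset.mul_sum]
  have hr : ∀ i ∈ range k, (X : ℤ[X]) ^ 2 * (C (g (i + 1)) * X ^ (2 * i + d))
      = C (g (i + 1)) * X ^ (2 * (i + 1) + d) := by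
    intro i _
    rw [show 2 * (i + 1) + d = (2 * i + d) + 2 by ring, pow_add]
    ring
  rw [Finset.sum_congr rfl hr]
  have h := Finset.sum_range_succ' (fun i => (C (g i) * X ^ (2 * i + d) : ℤ[X])) k
  rw [Finset.sum_range_succ] at h
  simp only [h0, hk, map_zero, zero_mul, add_zero] at h
  exact h

lemma aux (k : ℕ) (a : ℕ → ℤ) (h0 : a 0 = 0) (hk : a k = 0) :
    (∑ i ∈ range k, C ((a i + a (i + 1)) ^ 2) * X ^ (2 * i))
      - (∑ i ∈ range k, C ((a i + 2 * a (i + 1) + a (i + 2)) * a (i + 1)) * X ^ (2 * i + 1))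
    = (1 - X : ℤ[X]) ^ 2 *
        ((∑ i ∈ range k, C (a (i + 1) ^ 2) * X ^ (2 * i))
          - ∑ i ∈ range k, C (a (i + 1) * a (i + 2)) * X ^ (2 * i + 1)) := by
  have e1 : ∀ i ∈ range k, C ((a i + a (i + 1)) ^ 2) * X ^ (2 * i)
      = C (a i ^ 2) * X ^ (2 * i) + 2 * (C (a i * a (i + 1)) * X ^ (2 * i))
        + C (a (i + 1) ^ 2) * (X : ℤ[X]) ^ (2 * i) := by
    intro i _
    rw [show (a i + a (i + 1)) ^ 2 = a i ^ 2 + 2 * (a i * a (i + 1)) + a (i + 1) ^ 2 by ring]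
    simp only [map_add, map_mul, map_ofNat]
    ring
  have e2 : ∀ i ∈ range k, C ((a i + 2 * a (i + 1) + a (i + 2)) * a (i + 1)) * X ^ (2 * i + 1)
      = C (a i * a (i + 1)) * X ^ (2 * i + 1) + 2 * (C (a (i + 1) ^ 2) * X ^ (2 * i + 1))
        + C (a (i + 1) * a (i + 2)) * (X : ℤ[X]) ^ (2 * i + 1) := by
    intro i _
    rw [show (a i + 2 * a (i + 1) + a (i + 2)) * a (i + 1)
        = a i * a (i + 1) + 2 * (a (i + 1) ^ 2) + a (i + 1) * a (i + 2) by ring]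
    simp only [map_add, map_mul, map_ofNat]
    ring
  rw [Finset.sum_congr rfl e1, Finset.sum_congr rfl e2, Finset.sum_add_distrib,
    Finset.sum_add_distrib, Finset.sum_add_distrib, Finset.sum_add_distrib]
  rw [← Finset.mul_sum, ← Finset.mul_sum]
  have s1 := shift k 0 (fun i => a i ^ 2) (by simp [h0]) (by simp [hk])
  have s2 := shift k 0 (fun i => a i * a (i + 1)) (by simp [h0]) (by simp [hk])
  have s3 := shift k 1 (fun i => a i * a (i + 1)) (by simp [h0]) (by simp [hk])
  simp only [add_zero] at s1 s2 s3
  rw [s1, s2, s3]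
  have hX : ∀ i ∈ range k, (C (a (i + 1) ^ 2) * X ^ (2 * i + 1) : ℤ[X])
      = X * (C (a (i + 1) ^ 2) * X ^ (2 * i)) := by
    intro i _; rw [pow_succ]; ring
  have hX2 : ∀ i ∈ range k, (C (a (i + 1) * a (i + 2)) * X ^ (2 * i + 1) : ℤ[X])
      = X * (C (a (i + 1) * a (i + 2)) * X ^ (2 * i)) := by
    intro i _; rw [pow_succ]; ring
  simp only [show ∀ x : ℕ, x + 1 + 1 = x + 2 from fun x => rfl] at s2 s3
  rw [Finset.sum_congr rfl hX, Finset.sum_congr rfl hX2, ← Finset.mul_sum, ← Finset.mul_sum,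
    ]
  simp only [show ∀ x : ℕ, x + 1 + 1 = x + 2 from fun x => rfl]
  ring


/-- The polynomial identity
`∑_i C(k-1,i)^2 t^{2i} − ∑_i C(k,i+1) C(k-2,i) t^{2i+1}
  = (1-t)^2 (∑_i C(k-2,i)^2 t^{2i} − ∑_i C(k-2,i) C(k-2,i+1) t^{2i+1})` in `ℤ[t]`,
where all sums are finite (summing over `i < k` captures every nonzero term). -/
theorem stmt_4 (k : ℕ) (hk : 2 ≤ k) :
    (∑ i ∈ Finset.range k, Polynomial.C (binom ((k : ℤ) - 1) (i : ℤ) ^ 2) * X ^ (2 * i))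
      - (∑ i ∈ Finset.range k,
          Polynomial.C (binom (k : ℤ) ((i : ℤ) + 1) * binom ((k : ℤ) - 2) (i : ℤ)) *
            X ^ (2 * i + 1))
    = (1 - X : Polynomial ℤ) ^ 2 *
        ((∑ i ∈ Finset.range k, Polynomial.C (binom ((k : ℤ) - 2) (i : ℤ) ^ 2) * X ^ (2 * i))
          - ∑ i ∈ Finset.range k,
              Polynomial.C (binom ((k : ℤ) - 2) (i : ℤ) * binom ((k : ℤ) - 2) ((i : ℤ) + 1)) *
                X ^ (2 * i + 1)) := by
  obtain ⟨n, rfl⟩ : ∃ n, k = n + 2 := ⟨k - 2, by omega⟩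
  set a : ℕ → ℤ := fun j => binom n ((j : ℤ) - 1) with ha
  have han : ∀ i : ℕ, a (i + 1) = binom n i := by
    intro i; simp only [ha]; push_cast; ring_nf
  have hb1 : ∀ i : ℕ, binom (((n + 2 : ℕ) : ℤ) - 1) i = a i + a (i + 1) := by
    intro i
    have h := pascal n ((i : ℤ) - 1)
    rw [sub_add_cancel] at h
    rw [han, ha]
    push_cast
    rw [show ((n : ℤ) + 2 - 1) = ((n + 1 : ℕ) : ℤ) by push_cast; ring]
    exact h.symm
  have hb2 : ∀ i : ℕ, binom ((n + 2 : ℕ) : ℤ) ((i : ℤ) + 1)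
      = a i + 2 * a (i + 1) + a (i + 2) := by
    intro i
    have h1 := pascal (n + 1) (i : ℤ)
    have h2 := pascal n ((i : ℤ) - 1)
    have h3 := pascal n (i : ℤ)
    rw [sub_add_cancel] at h2
    have e1 : binom ((n + 1 : ℕ) : ℤ) (i : ℤ) = a i + a (i + 1) := by
      rw [han, ha]; push_cast; exact h2.symm
    have e2 : binom ((n + 1 : ℕ) : ℤ) ((i : ℤ) + 1) = a (i + 1) + a (i + 2) := by
      rw [han, show a (i + 2) = binom n ((i : ℤ) + 1) by simp only [ha]; push_cast; ring_nf]
      push_cast; exact h3.symm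
    rw [show ((n + 2 : ℕ) : ℤ) = ((n + 1 : ℕ) : ℤ) + 1 by push_cast; ring, ← h1, e1, e2]
    ring
  have hcongr1 : ∀ i ∈ range (n + 2), C (binom (((n + 2 : ℕ) : ℤ) - 1) (i : ℤ) ^ 2) * X ^ (2 * i)
      = C ((a i + a (i + 1)) ^ 2) * (X : ℤ[X]) ^ (2 * i) := by
    intro i _; rw [hb1]
  have hcongr2 : ∀ i ∈ range (n + 2),
      C (binom ((n + 2 : ℕ) : ℤ) ((i : ℤ) + 1) * binom (((n + 2 : ℕ) : ℤ) - 2) (i : ℤ))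
        * X ^ (2 * i + 1)
      = C ((a i + 2 * a (i + 1) + a (i + 2)) * a (i + 1)) * (X : ℤ[X]) ^ (2 * i + 1) := by
    intro i _
    rw [hb2, show (((n + 2 : ℕ) : ℤ) - 2) = (n : ℤ) by push_cast; ring, ← han]
  have hcongr3 : ∀ i ∈ range (n + 2),
      C (binom (((n + 2 : ℕ) : ℤ) - 2) (i : ℤ) ^ 2) * X ^ (2 * i)
      = C (a (i + 1) ^ 2) * (X : ℤ[X]) ^ (2 * i) := by
    intro i _
    rw [show (((n + 2 : ℕ) : ℤ) - 2) = (n : ℤ) by push_cast; ring, ← han]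
  have hcongr4 : ∀ i ∈ range (n + 2),
      C (binom (((n + 2 : ℕ) : ℤ) - 2) (i : ℤ) * binom (((n + 2 : ℕ) : ℤ) - 2) ((i : ℤ) + 1))
        * X ^ (2 * i + 1)
      = C (a (i + 1) * a (i + 2)) * (X : ℤ[X]) ^ (2 * i + 1) := by
    intro i _
    rw [show (((n + 2 : ℕ) : ℤ) - 2) = (n : ℤ) by push_cast; ring, ← han,
      show a (i + 2) = binom n ((i : ℤ) + 1) by simp only [ha]; push_cast; ring_nf]
  rw [Finset.sum_congr rfl hcongr1, Finset.sum_congr rfl hcongr2,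
    Finset.sum_congr rfl hcongr3, Finset.sum_congr rfl hcongr4]
  exact aux (n + 2) a (by simp [ha, binom]) (by rw [ha]; exact if_neg (by push_cast; omega))
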